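/- Under the sequential randomization assumption Y_{a(0),a(1)} ⟂ A(0) | L(0) and Y_{a(0),a(1)} ⟂ A(1) | (A(0), L(0), L(1)), consistency Y = Y_{A(0),A(1)}, and positivity, the counterfactual mean satisfies the g-formula: E[Y_{a(0),a(1)}] = E[ E[ E[Y | A(0)=a(0), A(1)=a(1), L(0), L(1)] | A(0)=a(0), L(0) ] ]. -/
import Mathlib


open Finset MeasureTheory

open scoped Classical

/-- Probability of an event on a finite outcome space with mass function `p`. -/
noncomputable def pr {Ω : Type*} [Fintype Ω] (p : Ω → ℝ) (E : Ω → Prop) : ℝ :=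
  ∑ ω, if E ω then p ω else 0

/-- Conditional expectation `E[f | E]` on a finite outcome space. -/
noncomputable def cexp {Ω : Type*} [Fintype Ω] (p : Ω → ℝ) (f : Ω → ℝ) (E : Ω → Prop) : ℝ :=
  (∑ ω, if E ω then p ω * f ω else 0) / pr p E

/-- Conditional probability `P(E | F)` on a finite outcome space. -/
noncomputable def cprob {Ω : Type*} [Fintype Ω] (p : Ω → ℝ) (E F : Ω → Prop) : ℝ :=
  pr p (fun ω => E ω ∧ F ω) / pr p F

/-- Expectation on a finite outcome space. -/
noncomputable def pexp {Ω : Type*} [Fintype Ω] (p : Ω → ℝ) (f : Ω → ℝ) : ℝ :=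
  ∑ ω, p ω * f ω

/-- `S` is conditionally independent of `T` given `C`:  for every pair of (bounded) test
functions `F, G` and every value `c` of `C` with positive probability, the conditional
expectation of the product factorizes. -/
def CondIndep {Ω α β γ : Type*} [Fintype Ω] (p : Ω → ℝ)
    (S : Ω → α) (T : Ω → β) (C : Ω → γ) : Prop :=
  ∀ (F : α → ℝ) (G : β → ℝ) (c : γ), pr p (fun ω => C ω = c) ≠ 0 →
    cexp p (fun ω => F (S ω) * G (T ω)) (fun ω => C ω = c) =
      cexp p (fun ω => F (S ω)) (fun ω => C ω = c) *
        cexp p (fun ω => G (T ω)) (fun ω => C ω = c)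

section helpers
variable {Ω : Type*} [Fintype Ω] {p : Ω → ℝ}

lemma pr_eq_zero_imp (hp : ∀ ω, 0 ≤ p ω) {E : Ω → Prop} (h : pr p E = 0) {ω : Ω}
    (hω : E ω) : p ω = 0 := by
  have h2 := (Finset.sum_eq_zero_iff_of_nonneg
    (fun ω _ => by split; exacts [hp ω, le_refl 0])).1 h ω (Finset.mem_univ ω)
  simpa [hω] using h2

lemma pr_mul_cexp (hp : ∀ ω, 0 ≤ p ω) (f : Ω → ℝ) (E : Ω → Prop) :
    pr p E * cexp p f E = ∑ ω, if E ω then p ω * f ω else 0 := by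
  by_cases h : pr p E = 0
  · rw [h, zero_mul]
    refine (Finset.sum_eq_zero fun ω _ => ?_).symm
    split
    · rename_i hE; rw [pr_eq_zero_imp hp h hE, zero_mul]
    · rfl
  · rw [cexp, mul_comm, div_mul_cancel₀ _ h]

lemma pexp_tower (hp : ∀ ω, 0 ≤ p ω) (f : Ω → ℝ) {γ : Type*} (C : Ω → γ) :
    pexp p f = ∑ c ∈ Finset.univ.image C,
      pr p (fun ω => C ω = c) * cexp p f (fun ω => C ω = c) := by
  have h1 : ∀ c ∈ Finset.univ.image C,
      pr p (fun ω => C ω = c) * cexp p f (fun ω => C ω = c)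
        = ∑ ω, if C ω = c then p ω * f ω else 0 := fun c _ => pr_mul_cexp hp f _
  rw [Finset.sum_congr rfl h1, Finset.sum_comm]
  refine (Finset.sum_congr rfl fun ω _ => ?_).symm
  rw [Finset.sum_ite_eq (Finset.univ.image C) (C ω) (fun _ => p ω * f ω)]
  simp

lemma cexp_tower (hp : ∀ ω, 0 ≤ p ω) (f : Ω → ℝ) (E : Ω → Prop) {γ : Type*} (D : Ω → γ)
    (hE : pr p E ≠ 0) :
    cexp p f E = ∑ d ∈ Finset.univ.image D,
      cprob p (fun ω => D ω = d) E * cexp p f (fun ω => D ω = d ∧ E ω) := by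
  have key : ∀ d ∈ Finset.univ.image D,
      cprob p (fun ω => D ω = d) E * cexp p f (fun ω => D ω = d ∧ E ω)
      = (pr p (fun ω => D ω = d ∧ E ω) * cexp p f (fun ω => D ω = d ∧ E ω)) / pr p E := by
    intro d _
    rw [cprob, div_mul_eq_mul_div]
  rw [Finset.sum_congr rfl key, ← Finset.sum_div, eq_div_iff hE, mul_comm, pr_mul_cexp hp]
  simp only [pr_mul_cexp hp]
  rw [Finset.sum_comm]
  refine (Finset.sum_congr rfl fun ω _ => ?_).symm
  by_cases h : E ω
  · simp only [h, and_true]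
    rw [Finset.sum_ite_eq (Finset.univ.image D) (D ω) (fun _ => p ω * f ω)]
    simp [h]
  · simp [h]

lemma cexp_const {E : Ω → Prop} (hE : pr p E ≠ 0) {f : Ω → ℝ} {r : ℝ}
    (h : ∀ ω, E ω → f ω = r) : cexp p f E = r := by
  rw [cexp]
  have : (∑ ω, if E ω then p ω * f ω else 0) = r * pr p E := by
    rw [pr, Finset.mul_sum]
    refine Finset.sum_congr rfl fun ω _ => ?_
    split
    · rename_i hω; rw [h ω hω]; ring
    · ring
  rw [this, mul_div_assoc, div_self hE, mul_one]

lemma cexp_congr {E : Ω → Prop} {f g : Ω → ℝ} (h : ∀ ω, E ω → f ω = g ω) :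
    cexp p f E = cexp p g E := by
  unfold cexp
  congr 1
  refine Finset.sum_congr rfl fun ω _ => ?_
  split
  · rename_i hω; rw [h ω hω]
  · rfl

lemma cexp_drop (hp : ∀ ω, 0 ≤ p ω) {S : Ω → Bool} {T : Ω → ℝ} {γ : Type*} {C : Ω → γ}
    (hCI : CondIndep p S T C) {a : Bool} {c : γ}
    (hc : pr p (fun ω => C ω = c) ≠ 0)
    (hpos : 0 < cprob p (fun ω => S ω = a) (fun ω => C ω = c)) :
    cexp p T (fun ω => S ω = a ∧ C ω = c) = cexp p T (fun ω => C ω = c) := by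
  have hB : pr p (fun ω => S ω = a ∧ C ω = c) ≠ 0 := by
    intro h
    rw [cprob, h, zero_div] at hpos
    exact lt_irrefl 0 hpos
  have e1 : pr p (fun ω => S ω = a ∧ C ω = c) * cexp p T (fun ω => S ω = a ∧ C ω = c)
      = pr p (fun ω => C ω = c) *
        cexp p (fun ω => (if S ω = a then (1 : ℝ) else 0) * T ω) (fun ω => C ω = c) := by
    rw [pr_mul_cexp hp, pr_mul_cexp hp]
    refine Finset.sum_congr rfl fun ω _ => ?_
    by_cases h1 : C ω = c <;> by_cases h2 : S ω = a <;> simp [h1, h2]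
  have e2 : pr p (fun ω => S ω = a ∧ C ω = c)
      = pr p (fun ω => C ω = c) *
        cexp p (fun ω => (if S ω = a then (1 : ℝ) else 0)) (fun ω => C ω = c) := by
    rw [pr_mul_cexp hp]
    unfold pr
    refine Finset.sum_congr rfl fun ω _ => ?_
    by_cases h1 : C ω = c <;> by_cases h2 : S ω = a <;> simp [h1, h2]
  have hfac := hCI (fun b => if b = a then (1 : ℝ) else 0) id c hc
  simp only [id] at hfac
  have e3 : pr p (fun ω => S ω = a ∧ C ω = c) * cexp p T (fun ω => S ω = a ∧ C ω = c)
      = pr p (fun ω => S ω = a ∧ C ω = c) * cexp p T (fun ω => C ω = c) := by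
    rw [e1, hfac, ← mul_assoc, ← e2]
  exact mul_left_cancel₀ hB e3

end helpers

/-- two-occasion g-formula: under sequential randomization, consistency
and positivity, `E[Y_{a0,a1}] = E[ E[ E[Y | A0=a0, A1=a1, L0, L1] | A0=a0, L0 ] ]`. -/
theorem stmt_6 {Ω ℒ0 ℒ1 : Type*} [Fintype Ω]
    (p : Ω → ℝ) (hp : ∀ ω, 0 ≤ p ω) (hsum : ∑ ω, p ω = 1)
    (A0 A1 : Ω → Bool) (L0 : Ω → ℒ0) (L1 : Ω → ℒ1)
    (Y : Ω → ℝ) (Y' : Bool → Bool → Ω → ℝ)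
    (a0 a1 : Bool)
    (hcons : ∀ ω, Y ω = Y' (A0 ω) (A1 ω) ω)
    (hSRA0 : CondIndep p A0 (fun ω => Y' a0 a1 ω) L0)
    (hSRA1 : CondIndep p A1 (fun ω => Y' a0 a1 ω) (fun ω => (A0 ω, L0 ω, L1 ω)))
    (hpos0 : ∀ (a : Bool) l0, pr p (fun ω => L0 ω = l0) ≠ 0 →
      0 < cprob p (fun ω => A0 ω = a) (fun ω => L0 ω = l0))
    (hpos1 : ∀ (a a' : Bool) l0 l1,
      pr p (fun ω => A0 ω = a' ∧ L0 ω = l0 ∧ L1 ω = l1) ≠ 0 →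
      0 < cprob p (fun ω => A1 ω = a) (fun ω => A0 ω = a' ∧ L0 ω = l0 ∧ L1 ω = l1)) :
    pexp p (Y' a0 a1) =
      pexp p (fun ω =>
        cexp p
          (fun ω' =>
            cexp p Y (fun ω'' =>
              A0 ω'' = a0 ∧ A1 ω'' = a1 ∧ L0 ω'' = L0 ω ∧ L1 ω'' = L1 ω'))
          (fun ω' => A0 ω' = a0 ∧ L0 ω' = L0 ω)) := by
  have key1 : ∀ (l0 : ℒ0) (l1 : ℒ1),
      pr p (fun ω => A0 ω = a0 ∧ L0 ω = l0 ∧ L1 ω = l1) ≠ 0 →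
      cexp p (Y' a0 a1) (fun ω => A0 ω = a0 ∧ L0 ω = l0 ∧ L1 ω = l1)
        = cexp p Y (fun ω => A0 ω = a0 ∧ A1 ω = a1 ∧ L0 ω = l0 ∧ L1 ω = l1) := by
    intro l0 l1 hb
    have eC : (fun ω => (A0 ω, L0 ω, L1 ω) = (a0, l0, l1))
        = (fun ω => A0 ω = a0 ∧ L0 ω = l0 ∧ L1 ω = l1) := by
      funext ω; exact propext (by simp [Prod.ext_iff])
    have hc : pr p (fun ω => (A0 ω, L0 ω, L1 ω) = (a0, l0, l1)) ≠ 0 := by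
      rw [eC]; exact hb
    have hpos := hpos1 a1 a0 l0 l1 hb
    have hpos' : 0 < cprob p (fun ω => A1 ω = a1)
        (fun ω => (A0 ω, L0 ω, L1 ω) = (a0, l0, l1)) := by
      rw [eC]; exact hpos
    have hdrop := cexp_drop hp hSRA1 hc hpos'
    have eD : (fun ω => A1 ω = a1 ∧ (A0 ω, L0 ω, L1 ω) = (a0, l0, l1))
        = (fun ω => A0 ω = a0 ∧ A1 ω = a1 ∧ L0 ω = l0 ∧ L1 ω = l1) := by
      funext ω
      refine propext ?_
      simp only [Prod.mk.injEq]
      tauto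
    rw [eD, eC] at hdrop
    rw [← hdrop]
    refine cexp_congr fun ω hω => ?_
    rw [hcons ω, hω.1, hω.2.1]
  have key0 : ∀ l0 : ℒ0, pr p (fun ω => L0 ω = l0) ≠ 0 →
      cexp p (Y' a0 a1) (fun ω => L0 ω = l0)
        = cexp p (fun ω' => cexp p Y (fun ω'' =>
              A0 ω'' = a0 ∧ A1 ω'' = a1 ∧ L0 ω'' = l0 ∧ L1 ω'' = L1 ω'))
            (fun ω' => A0 ω' = a0 ∧ L0 ω' = l0) := by
    intro l0 h0
    have hpep := hpos0 a0 l0 h0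
    rw [← cexp_drop hp hSRA0 h0 hpep]
    have hEa : pr p (fun ω => A0 ω = a0 ∧ L0 ω = l0) ≠ 0 := by
      intro h
      simp only [cprob, h, zero_div] at hpep
      exact lt_irrefl 0 hpep
    rw [cexp_tower hp (Y' a0 a1) (fun ω => A0 ω = a0 ∧ L0 ω = l0) L1 hEa,
        cexp_tower hp (fun ω' => cexp p Y (fun ω'' =>
              A0 ω'' = a0 ∧ A1 ω'' = a1 ∧ L0 ω'' = l0 ∧ L1 ω'' = L1 ω'))
          (fun ω => A0 ω = a0 ∧ L0 ω = l0) L1 hEa]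
    refine Finset.sum_congr rfl fun l1 _ => ?_
    by_cases hcp : cprob p (fun ω => L1 ω = l1) (fun ω => A0 ω = a0 ∧ L0 ω = l0) = 0
    · rw [hcp, zero_mul, zero_mul]
    · congr 1
      have hsub : pr p (fun ω => L1 ω = l1 ∧ (A0 ω = a0 ∧ L0 ω = l0)) ≠ 0 := by
        intro h
        simp only [cprob, h, zero_div] at hcp
        exact hcp trivial
      have eSub : (fun ω => L1 ω = l1 ∧ (A0 ω = a0 ∧ L0 ω = l0))
          = (fun ω => A0 ω = a0 ∧ L0 ω = l0 ∧ L1 ω = l1) := by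
        funext ω; exact propext (by tauto)
      rw [eSub] at hsub ⊢
      rw [key1 l0 l1 hsub]
      exact (cexp_const hsub fun ω hω => by rw [hω.2.2]).symm
  rw [pexp_tower hp (Y' a0 a1) L0,
      pexp_tower hp (fun ω => cexp p (fun ω' => cexp p Y (fun ω'' =>
              A0 ω'' = a0 ∧ A1 ω'' = a1 ∧ L0 ω'' = L0 ω ∧ L1 ω'' = L1 ω'))
          (fun ω' => A0 ω' = a0 ∧ L0 ω' = L0 ω)) L0]
  refine Finset.sum_congr rfl fun l0 _ => ?_
  by_cases h0 : pr p (fun ω => L0 ω = l0) = 0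
  · rw [h0, zero_mul, zero_mul]
  · congr 1
    rw [key0 l0 h0]
    refine (cexp_const h0 fun ω hω => ?_).symm
    rw [hω]
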